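/- Let (X,ρ) be a complete metric space, K ⊂ X compact, and (π_t)_{t≥0} an asymptotically stable Markov–Feller stochastically continuous semigroup on X with the e-property, such that P_t^*δ_x is tight for every t ≥ 0 and x ∈ K. Then the family {P_t^*δ_x : t ≥ 0, x ∈ K} is uniformly tight: for every ε > 0 there exists a compact set K_ε ⊂ X such that P_t^*δ_x(X ∖ K_ε) < ε for all t ≥ 0 and all x ∈ K. -/

import Mathlib

open MeasureTheory Filter Topology
open scoped ENNReal

/-- A Markov–Feller stochastically continuous semigroup of probability kernels on a metric
space `X`. -/
structure MarkovFellerSemigroup {X : Type*} [MetricSpace X] [MeasurableSpace X] [BorelSpace X]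
    (π : ℝ → X → Measure X) : Prop where
  prob : ∀ t, 0 ≤ t → ∀ x, IsProbabilityMeasure (π t x)
  meas : ∀ t, 0 ≤ t → ∀ A : Set X, MeasurableSet A → Measurable fun x => π t x A
  init : ∀ x, π 0 x = Measure.dirac x
  semigroup : ∀ t, 0 ≤ t → ∀ s, 0 ≤ s → ∀ x, ∀ A : Set X, MeasurableSet A →
    π (t + s) x A = ∫⁻ y, π s y A ∂(π t x)
  feller : ∀ t, 0 ≤ t → ∀ φ : BoundedContinuousFunction X ℝ,
    Continuous fun x => ∫ y, φ y ∂(π t x)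
  stochCont : ∀ φ : BoundedContinuousFunction X ℝ, ∀ x : X,
    Tendsto (fun t => ∫ y, φ y ∂(π t x)) (nhdsWithin 0 (Set.Ioi 0)) (nhds (φ x))

/-- The e-property: for every bounded Lipschitz `φ` the family `(P_t φ)_{t ≥ 0}` is
equicontinuous at every point of `X`. -/
def HasEProperty {X : Type*} [MetricSpace X] [MeasurableSpace X] [BorelSpace X]
    (π : ℝ → X → Measure X) : Prop :=
  ∀ φ : X → ℝ, (∃ K : NNReal, LipschitzWith K φ) → (∃ C : ℝ, ∀ x, |φ x| ≤ C) →
    ∀ x₀ : X, ∀ ε : ℝ, 0 < ε → ∃ δ > 0, ∀ y : X, dist y x₀ < δ → ∀ t, 0 ≤ t →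
      |(∫ v, φ v ∂(π t y)) - (∫ v, φ v ∂(π t x₀))| < ε

/-- Asymptotic stability: there is a unique invariant probability measure `μ_*` and
`P_t^* μ → μ_*` weakly as `t → ∞` for every probability measure `μ`. -/
def AsymptoticallyStable {X : Type*} [MetricSpace X] [MeasurableSpace X] [BorelSpace X]
    (π : ℝ → X → Measure X) : Prop :=
  ∃ μs : Measure X, IsProbabilityMeasure μs ∧
    (∀ t, 0 ≤ t → μs.bind (π t) = μs) ∧
    (∀ ν : Measure X, IsProbabilityMeasure ν → (∀ t, 0 ≤ t → ν.bind (π t) = ν) → ν = μs) ∧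
    (∀ μ : Measure X, IsProbabilityMeasure μ → ∀ φ : BoundedContinuousFunction X ℝ,
      Tendsto (fun t => ∫ x, φ x ∂(μ.bind (π t))) atTop (nhds (∫ x, φ x ∂μs)))

set_option linter.unusedSectionVars false
set_option linter.unusedVariables false
set_option maxHeartbeats 1000000

noncomputable section UT
open Metric

variable {X : Type*} [MetricSpace X] [MeasurableSpace X] [BorelSpace X]

/-- finite union of closed balls -/
def finBall (F : Finset X) (s : ℝ) : Set X := ⋃ z ∈ F, Metric.closedBall z s

lemma finBall_closed (F : Finset X) (s : ℝ) : IsClosed (finBall F s) :=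
  Set.Finite.isClosed_biUnion F.finite_toSet fun _ _ => Metric.isClosed_closedBall

lemma finBall_meas (F : Finset X) (s : ℝ) : MeasurableSet (finBall F s) :=
  (finBall_closed F s).measurableSet

lemma finBall_mono {F : Finset X} {s s' : ℝ} (h : s ≤ s') : finBall F s ⊆ finBall F s' :=
  Set.iUnion₂_mono fun _ _ => Metric.closedBall_subset_closedBall h

lemma finBall_union [DecidableEq X] (F G : Finset X) (s : ℝ) :
    finBall (F ∪ G) s = finBall F s ∪ finBall G s := by
  simp only [finBall]
  rw [Finset.set_biUnion_union]

lemma finBall_nonempty {F : Finset X} (hF : F.Nonempty) {s : ℝ} (hs : 0 ≤ s) :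
    (finBall F s).Nonempty := by
  obtain ⟨z, hz⟩ := hF
  exact ⟨z, Set.mem_biUnion hz (Metric.mem_closedBall_self hs)⟩

lemma finBall_nonempty_finset {F : Finset X} {s : ℝ} (h : (finBall F s).Nonempty) :
    F.Nonempty := by
  obtain ⟨y, hy⟩ := h
  obtain ⟨z, hz, -⟩ := Set.mem_iUnion₂.1 hy
  exact ⟨z, hz⟩

/-- bump function around a set -/
def bump (A : Set X) (r : ℝ) (y : X) : ℝ := max (1 - Metric.infDist y A / r) 0

lemma bump_nonneg (A : Set X) (r : ℝ) (y : X) : 0 ≤ bump A r y := le_max_right _ _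

lemma bump_le_one (A : Set X) {r : ℝ} (hr : 0 < r) (y : X) : bump A r y ≤ 1 := by
  apply max_le _ zero_le_one
  have := Metric.infDist_nonneg (x := y) (s := A)
  nlinarith [div_nonneg this hr.le]

lemma bump_eq_one_of_mem {A : Set X} {r : ℝ} {y : X} (hy : y ∈ A) : bump A r y = 1 := by
  simp [bump, Metric.infDist_zero_of_mem hy]

lemma bump_eq_zero {A : Set X} {r : ℝ} (hr : 0 < r) {y : X} (h : r < Metric.infDist y A) :
    bump A r y = 0 := by
  have : 1 - Metric.infDist y A / r < 0 := by
    rw [sub_neg]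
    exact (one_lt_div hr).2 h
  simp [bump, max_eq_right this.le]

lemma bump_lipschitz (A : Set X) {r : ℝ} (hr : 0 < r) :
    LipschitzWith (Real.toNNReal r⁻¹) (bump A r) := by
  apply LipschitzWith.of_dist_le_mul
  intro y z
  rw [Real.dist_eq, Real.coe_toNNReal _ (by positivity)]
  have h1 : |(1 - Metric.infDist y A / r) - (1 - Metric.infDist z A / r)| ≤ r⁻¹ * dist y z := by
    have h2 : dist (Metric.infDist y A) (Metric.infDist z A) ≤ 1 * dist y z :=
      (Metric.lipschitz_infDist_pt A).dist_le_mul y z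
    rw [Real.dist_eq, one_mul] at h2
    have : (1 - Metric.infDist y A / r) - (1 - Metric.infDist z A / r)
        = (Metric.infDist z A - Metric.infDist y A) / r := by ring
    rw [this, abs_div, abs_of_pos hr, div_eq_inv_mul, abs_sub_comm]
    exact mul_le_mul_of_nonneg_left h2 (by positivity)
  exact le_trans (abs_max_sub_max_le_abs _ _ _) h1

lemma bump_continuous (A : Set X) {r : ℝ} (hr : 0 < r) : Continuous (bump A r) :=
  (bump_lipschitz A hr).continuous

/-- bump as a bounded continuous function -/
def bumpBCF (A : Set X) {r : ℝ} (hr : 0 < r) : BoundedContinuousFunction X ℝ :=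
  BoundedContinuousFunction.ofNormedAddCommGroup (bump A r) (bump_continuous A hr) 1
    (fun y => by
      rw [Real.norm_eq_abs, abs_of_nonneg (bump_nonneg A r y)]
      exact bump_le_one A hr y)

lemma bumpBCF_apply (A : Set X) {r : ℝ} (hr : 0 < r) (y : X) : bumpBCF A hr y = bump A r y := rfl

lemma bump_integrable (A : Set X) {r : ℝ} (hr : 0 < r) (μ : Measure X) [IsFiniteMeasure μ] :
    Integrable (bump A r) μ := (bumpBCF A hr).integrable μ

lemma integral_bump_ge {A : Set X} (hA : MeasurableSet A) {r : ℝ} (hr : 0 < r)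
    (μ : Measure X) [IsProbabilityMeasure μ] {a : ℝ} (ha : 0 ≤ a)
    (h : μ Aᶜ ≤ ENNReal.ofReal a) : 1 - a ≤ ∫ y, bump A r y ∂μ := by
  have h1 : (μ Aᶜ).toReal ≤ a := by
    have := ENNReal.toReal_mono ENNReal.ofReal_ne_top h
    rwa [ENNReal.toReal_ofReal ha] at this
  have h2 : (μ A).toReal + (μ Aᶜ).toReal = 1 := by
    rw [← ENNReal.toReal_add (measure_ne_top μ A) (measure_ne_top μ Aᶜ),
      measure_add_measure_compl hA]
    simp
  have h3 : ∫ y, A.indicator (fun _ => (1:ℝ)) y ∂μ ≤ ∫ y, bump A r y ∂μ := by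
    apply integral_mono ((integrable_const (1:ℝ)).indicator hA) (bump_integrable A hr μ)
    intro y
    by_cases hy : y ∈ A
    · simp [Set.indicator_of_mem hy, bump_eq_one_of_mem hy]
    · simp [Set.indicator_of_notMem hy, bump_nonneg]
  rw [integral_indicator_const _ hA] at h3
  simp only [smul_eq_mul, mul_one] at h3
  linarith [measureReal_def μ A]

lemma measure_compl_le_of_integral_bump {A : Set X} {r : ℝ} (hr : 0 < r)
    (μ : Measure X) [IsProbabilityMeasure μ] {a : ℝ}
    (h : 1 - a ≤ ∫ y, bump A r y ∂μ) :
    μ {y | Metric.infDist y A ≤ r}ᶜ ≤ ENNReal.ofReal a := by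
  set S : Set X := {y | Metric.infDist y A ≤ r} with hS
  have hSmeas : MeasurableSet S :=
    (isClosed_le (Metric.continuous_infDist_pt A) continuous_const).measurableSet
  have h3 : ∫ y, Sᶜ.indicator (fun _ => (1:ℝ)) y ∂μ ≤ ∫ y, (1 - bump A r y) ∂μ := by
    apply integral_mono ((integrable_const (1:ℝ)).indicator hSmeas.compl)
      ((integrable_const (1:ℝ)).sub (bump_integrable A hr μ))
    intro y
    by_cases hy : y ∈ Sᶜ
    · have : r < Metric.infDist y A := by
        simpa [S] using hy
      simp [Set.indicator_of_mem hy, Pi.sub_apply, bump_eq_zero hr this]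
    · have := bump_le_one A hr y
      simp only [Set.indicator_of_notMem hy, Pi.sub_apply]
      linarith
  rw [integral_indicator_const _ hSmeas.compl, integral_sub (integrable_const _)
    (bump_integrable A hr μ), integral_const] at h3
  simp only [smul_eq_mul, mul_one, measure_univ, ENNReal.toReal_one, probReal_univ, one_smul] at h3
  have h4 : (μ Sᶜ).toReal ≤ a := by linarith [measureReal_def μ Sᶜ]
  calc μ Sᶜ = ENNReal.ofReal (μ Sᶜ).toReal := (ENNReal.ofReal_toReal (measure_ne_top μ Sᶜ)).symm
  _ ≤ ENNReal.ofReal a := ENNReal.ofReal_le_ofReal h4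

lemma thickening_subset_finBall {F : Finset X} (hF : F.Nonempty) {s r : ℝ} (hs : 0 ≤ s)
    (hr : 0 < r) : {y | Metric.infDist y (finBall F s) ≤ r} ⊆ finBall F (s + r) := by
  intro y hy
  simp only [Set.mem_setOf_eq] at hy
  by_contra hc
  have hall : ∀ z ∈ F, s + r < dist y z := by
    intro z hz
    by_contra hzc
    push_neg at hzc
    exact hc (Set.mem_biUnion hz (Metric.mem_closedBall.2 hzc))
  set m := F.inf' hF (fun z => dist y z) with hm
  have hmgt : s + r < m := by
    rw [Finset.lt_inf'_iff]
    exact hall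
  set γ := (m - s - r) / 2 with hγ
  have hγpos : 0 < γ := by simp only [hγ]; linarith
  have h5 : Metric.infDist y (finBall F s) < r + γ := lt_of_le_of_lt hy (by linarith)
  obtain ⟨a, haA, hda⟩ := (Metric.infDist_lt_iff (finBall_nonempty hF hs)).1 h5
  obtain ⟨z, hzF, hza⟩ := Set.mem_iUnion₂.1 haA
  have hza' : dist a z ≤ s := Metric.mem_closedBall.1 hza
  have : dist y z ≤ dist y a + dist a z := dist_triangle y a z
  have hmz : m ≤ dist y z := Finset.inf'_le _ hzF
  simp only [hγ] at hda
  linarith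


section SG

variable {π : ℝ → X → Measure X}



lemma MFS.measurable_pi (h : MarkovFellerSemigroup π) {t : ℝ} (ht : 0 ≤ t) :
    Measurable (π t) :=
  Measure.measurable_of_measurable_coe _ fun _ hs => h.meas t ht _ hs

lemma MFS.bind_eq (h : MarkovFellerSemigroup π) {t s : ℝ} (ht : 0 ≤ t) (hs : 0 ≤ s) (x : X) :
    (π t x).bind (π s) = π (t + s) x := by
  ext A hA
  rw [Measure.bind_apply hA (MFS.measurable_pi h hs).aemeasurable, h.semigroup t ht s hs x A hA]

lemma MFS.dirac_bind (h : MarkovFellerSemigroup π) {t : ℝ} (ht : 0 ≤ t) (x : X) :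
    (Measure.dirac x).bind (π t) = π t x :=
  Measure.dirac_bind (MFS.measurable_pi h ht) x

lemma MFS.norm_P_le (h : MarkovFellerSemigroup π) {s : ℝ} (hs : 0 ≤ s)
    (φ : BoundedContinuousFunction X ℝ) (y : X) : |∫ v, φ v ∂(π s y)| ≤ ‖φ‖ := by
  haveI := h.prob s hs y
  calc |∫ v, φ v ∂(π s y)| = ‖∫ v, φ v ∂(π s y)‖ := (Real.norm_eq_abs _).symm
    _ ≤ ‖φ‖ * ((π s y) Set.univ).toReal := norm_integral_le_of_norm_le_const
        (Eventually.of_forall fun v => φ.norm_coe_le_norm v)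
    _ = ‖φ‖ := by simp

lemma MFS.integral_bind (h : MarkovFellerSemigroup π) {t s : ℝ} (ht : 0 ≤ t) (hs : 0 ≤ s)
    (x : X) (φ : BoundedContinuousFunction X ℝ) :
    ∫ y, φ y ∂(π (t + s) x) = ∫ y, (∫ v, φ v ∂(π s y)) ∂(π t x) := by
  haveI := h.prob t ht x
  haveI := h.prob (t + s) (by linarith) x
  set C := ‖φ‖ with hC
  set g : X → ℝ := fun y => ∫ v, φ v ∂(π s y) with hg
  have hgcont : Continuous g := h.feller s hs φ
  have hgbd : ∀ y, |g y| ≤ C := fun y => MFS.norm_P_le h hs φ y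
  set gB : BoundedContinuousFunction X ℝ :=
    BoundedContinuousFunction.ofNormedAddCommGroup g hgcont C
      (fun y => by rw [Real.norm_eq_abs]; exact hgbd y) with hgB
  -- lintegral identity
  have key : ∫⁻ v, ENNReal.ofReal (φ v + C) ∂(π (t + s) x)
      = ∫⁻ y, (∫⁻ v, ENNReal.ofReal (φ v + C) ∂(π s y)) ∂(π t x) := by
    rw [← MFS.bind_eq h ht hs x]
    exact Measure.lintegral_bind (MFS.measurable_pi h hs).aemeasurable
      (ENNReal.measurable_ofReal.comp ((φ.continuous.add continuous_const).measurable)).aemeasurable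
  have hφC : ∀ (ν : Measure X), IsProbabilityMeasure ν →
      ∫⁻ v, ENNReal.ofReal (φ v + C) ∂ν = ENNReal.ofReal ((∫ v, φ v ∂ν) + C) := by
    intro ν hν
    have hint : Integrable (fun v => φ v + C) ν := (φ.integrable ν).add (integrable_const C)
    have hnn : 0 ≤ᵐ[ν] (fun v => φ v + C) := Eventually.of_forall (fun v => by
      have := (abs_le.1 ((Real.norm_eq_abs (φ v)) ▸ φ.norm_coe_le_norm v)).1
      simp only [Pi.zero_apply]
      linarith)
    rw [← ofReal_integral_eq_lintegral_ofReal hint hnn,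
      integral_add (φ.integrable ν) (integrable_const C), integral_const]
    simp
  have inner : ∀ y, ∫⁻ v, ENNReal.ofReal (φ v + C) ∂(π s y) = ENNReal.ofReal (g y + C) :=
    fun y => hφC (π s y) (h.prob s hs y)
  rw [hφC _ ‹_›] at key
  simp only [inner] at key
  have hgint : Integrable g (π t x) := gB.integrable (π t x)
  have outer : ∫⁻ y, ENNReal.ofReal (g y + C) ∂(π t x)
      = ENNReal.ofReal ((∫ y, g y ∂(π t x)) + C) := by
    have hint : Integrable (fun y => g y + C) (π t x) := hgint.add (integrable_const C)
    have hnn : 0 ≤ᵐ[π t x] (fun y => g y + C) := Eventually.of_forall (fun y => by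
      have := (abs_le.1 (hgbd y)).1
      simp only [Pi.zero_apply]
      linarith)
    rw [← ofReal_integral_eq_lintegral_ofReal hint hnn,
      integral_add hgint (integrable_const C), integral_const]
    simp
  rw [outer] at key
  have h1 : |∫ v, φ v ∂(π (t+s) x)| ≤ C := MFS.norm_P_le h (by linarith) φ x
  have h2 : |∫ y, g y ∂(π t x)| ≤ C := by
    calc |∫ y, g y ∂(π t x)| = ‖∫ y, g y ∂(π t x)‖ := (Real.norm_eq_abs _).symm
      _ ≤ C * ((π t x) Set.univ).toReal := norm_integral_le_of_norm_le_const
          (Eventually.of_forall fun y => by rw [Real.norm_eq_abs]; exact hgbd y)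
      _ = C := by simp
  have := (ENNReal.ofReal_eq_ofReal_iff (by linarith [(abs_le.1 h1).1])
    (by linarith [(abs_le.1 h2).1])).1 key
  linarith

lemma MFS.small_time (h : MarkovFellerSemigroup π) (x : X) {δ β : ℝ} (hδ : 0 < δ)
    (hβ : 0 < β) :
    ∃ w > 0, ∀ u : ℝ, 0 < u → u < w → (π u x) (Metric.ball x δ)ᶜ ≤ ENNReal.ofReal β := by
  have hδ2 : 0 < δ / 2 := by linarith
  set ψ := bumpBCF ({x} : Set X) hδ2 with hψ
  have hψx : ψ x = 1 := bump_eq_one_of_mem (Set.mem_singleton x)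
  have h1 := h.stochCont ψ x
  rw [hψx] at h1
  have h2 : ∀ᶠ u in nhdsWithin 0 (Set.Ioi 0), |(∫ y, ψ y ∂(π u x)) - 1| < β := by
    have := h1 (Metric.ball_mem_nhds (1:ℝ) hβ)
    filter_upwards [this] with u hu
    simpa [Real.dist_eq] using hu
  obtain ⟨w, hw, hww⟩ := mem_nhdsGT_iff_exists_Ioo_subset.1 h2
  refine ⟨w, hw, fun u hu huw => ?_⟩
  haveI := h.prob u hu.le x
  have h3 : |(∫ y, ψ y ∂(π u x)) - 1| < β := hww ⟨hu, huw⟩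
  have h4 : 1 - β ≤ ∫ y, bump ({x} : Set X) (δ/2) y ∂(π u x) := by
    have := (abs_lt.1 h3).1
    have heq : (∫ y, ψ y ∂(π u x)) = ∫ y, bump ({x} : Set X) (δ/2) y ∂(π u x) := rfl
    linarith [heq ▸ this]
  have h5 := measure_compl_le_of_integral_bump hδ2 (π u x) h4
  refine le_trans (measure_mono ?_) h5
  intro y hy
  simp only [Set.mem_compl_iff, Metric.mem_ball, not_lt] at hy
  simp only [Set.mem_compl_iff, Set.mem_setOf_eq, not_le]
  have : Metric.infDist y ({x} : Set X) = dist y x := Metric.infDist_singleton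
  rw [this]
  linarith

lemma MFS.time_cont (h : MarkovFellerSemigroup π) (he : HasEProperty π)
    (φ : BoundedContinuousFunction X ℝ) (hlip : ∃ L : NNReal, LipschitzWith L φ)
    (x : X) {t₀ : ℝ} (ht₀ : 0 ≤ t₀) {β : ℝ} (hβ : 0 < β) :
    ∃ w > 0, ∀ t, 0 ≤ t → |t - t₀| < w →
      |(∫ v, φ v ∂(π t x)) - (∫ v, φ v ∂(π t₀ x))| ≤ (1 + 2*‖φ‖) * β := by
  have hbd : ∀ y, |φ y| ≤ ‖φ‖ := fun y => by
    rw [← Real.norm_eq_abs]; exact φ.norm_coe_le_norm y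
  obtain ⟨δ, hδ, hδprop⟩ := he φ hlip ⟨‖φ‖, hbd⟩ x β hβ
  obtain ⟨w, hw, hwprop⟩ := MFS.small_time h x hδ hβ
  refine ⟨w, hw, fun t ht htw => ?_⟩
  -- main estimate
  have main : ∀ s, 0 ≤ s → ∀ u, 0 < u → u < w →
      |(∫ v, φ v ∂(π (u + s) x)) - (∫ v, φ v ∂(π s x))| ≤ (1 + 2*‖φ‖) * β := by
    intro s hs u hu huw
    haveI := h.prob u hu.le x
    set g : X → ℝ := fun y => ∫ v, φ v ∂(π s y) with hg
    have hgcont : Continuous g := h.feller s hs φ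
    have hgbd : ∀ y, |g y| ≤ ‖φ‖ := fun y => MFS.norm_P_le h hs φ y
    set gB : BoundedContinuousFunction X ℝ :=
      BoundedContinuousFunction.ofNormedAddCommGroup g hgcont ‖φ‖
        (fun y => by rw [Real.norm_eq_abs]; exact hgbd y) with hgB
    have hgint : Integrable g (π u x) := gB.integrable (π u x)
    have hbind : (∫ v, φ v ∂(π (u + s) x)) = ∫ y, g y ∂(π u x) :=
      MFS.integral_bind h hu.le hs x φ
    have hgx : (∫ v, φ v ∂(π s x)) = g x := rfl
    rw [hbind, hgx]
    have hsub : (∫ y, g y ∂(π u x)) - g x = ∫ y, (g y - g x) ∂(π u x) := by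
      rw [integral_sub hgint (integrable_const (g x)), integral_const]
      simp
    rw [hsub]
    set B := Metric.ball x δ with hB
    have hBmeas : MeasurableSet B := Metric.isOpen_ball.measurableSet
    have hmain : ∀ y, |g y - g x| ≤ β + Bᶜ.indicator (fun _ => 2*‖φ‖) y := by
      intro y
      by_cases hy : y ∈ B
      · have := hδprop y (Metric.mem_ball.1 hy) s hs
        simp only [Set.indicator_of_notMem (by simpa using hy : y ∉ Bᶜ)]
        rw [hg]
        linarith [this]
      · have h1 := hgbd y
        have h2 := hgbd x
        have : |g y - g x| ≤ 2 * ‖φ‖ := by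
          calc |g y - g x| ≤ |g y| + |g x| := abs_sub _ _
          _ ≤ 2 * ‖φ‖ := by linarith
        simp only [Set.indicator_of_mem (by simpa using hy : y ∈ Bᶜ)]
        linarith
    have hint1 : Integrable (fun y => |g y - g x|) (π u x) :=
      (hgint.sub (integrable_const (g x))).abs
    have hint2 : Integrable (fun y => β + Bᶜ.indicator (fun _ => 2*‖φ‖) y) (π u x) :=
      (integrable_const β).add ((integrable_const (2*‖φ‖)).indicator hBmeas.compl)
    have habs : |∫ y, (g y - g x) ∂(π u x)| ≤ ∫ y, |g y - g x| ∂(π u x) := by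
      simpa [Real.norm_eq_abs] using
        norm_integral_le_integral_norm (μ := π u x) (f := fun y => g y - g x)
    calc |∫ y, (g y - g x) ∂(π u x)| ≤ ∫ y, |g y - g x| ∂(π u x) := habs
      _ ≤ ∫ y, (β + Bᶜ.indicator (fun _ => 2*‖φ‖) y) ∂(π u x) :=
          integral_mono hint1 hint2 hmain
      _ = β + ((π u x) Bᶜ).toReal • (2*‖φ‖) := by
          rw [integral_add (integrable_const β) ((integrable_const (2*‖φ‖)).indicator
            hBmeas.compl), integral_const, integral_indicator_const _ hBmeas.compl]
          simp
          exact Or.inl (measureReal_def _ _)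
      _ ≤ β + β * (2*‖φ‖) := by
          have h6 := hwprop u hu huw
          have h7 : ((π u x) Bᶜ).toReal ≤ β := by
            have := ENNReal.toReal_mono ENNReal.ofReal_ne_top h6
            rwa [ENNReal.toReal_ofReal hβ.le] at this
          have h8 : (0:ℝ) ≤ 2*‖φ‖ := by positivity
          rw [smul_eq_mul]
          nlinarith
      _ = (1 + 2*‖φ‖) * β := by ring
  rcases le_or_gt t₀ t with hc | hc
  · rcases eq_or_lt_of_le hc with rfl | hlt
    · simp [sub_self, abs_zero]; positivity
    · have := main t₀ ht₀ (t - t₀) (by linarith) (by rw [abs_of_pos (by linarith)] at htw; linarith)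
      rw [show t - t₀ + t₀ = t by ring] at this
      exact this
  · have := main t ht (t₀ - t) (by linarith) (by rw [abs_of_neg (by linarith)] at htw; linarith)
    rw [show t₀ - t + t = t₀ by ring, abs_sub_comm] at this
    exact this

lemma finBall_subset {F F' : Finset X} (h : F ⊆ F') (s : ℝ) : finBall F s ⊆ finBall F' s :=
  Set.biUnion_subset_biUnion_left (by exact_mod_cast h)

lemma norm_bumpBCF_le (A : Set X) {r : ℝ} (hr : 0 < r) : ‖bumpBCF A hr‖ ≤ 1 :=
  BoundedContinuousFunction.norm_ofNormedAddCommGroup_le _ zero_le_one _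

/-- tightness of `π t x` near a fixed time `t₀`, for a fixed `x`. -/
lemma MFS.near_time (h : MarkovFellerSemigroup π) (he : HasEProperty π) (x : X)
    (htx : ∀ t : ℝ, 0 ≤ t → ∀ ε : ℝ, 0 < ε →
      ∃ C : Set X, IsCompact C ∧ (π t x) Cᶜ < ENNReal.ofReal ε)
    {r η : ℝ} (hr : 0 < r) (hη : 0 < η) (t₀ : ℝ) :
    ∃ w > 0, ∃ F : Finset X, ∀ t, 0 ≤ t → |t - t₀| < w →
      (π t x) (finBall F (2*r))ᶜ ≤ ENNReal.ofReal η := by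
  set t₁ := max t₀ 0 with ht₁
  have ht₁0 : 0 ≤ t₁ := le_max_right _ _
  haveI := h.prob t₁ ht₁0 x
  obtain ⟨C, hC, hCm⟩ := htx t₁ ht₁0 (η/2) (by linarith)
  set C' : Set X := C ∪ {x} with hC'
  have hC'c : IsCompact C' := hC.union isCompact_singleton
  have hC'm : (π t₁ x) C'ᶜ ≤ ENNReal.ofReal (η/2) :=
    le_trans (measure_mono (Set.compl_subset_compl.2 Set.subset_union_left)) hCm.le
  obtain ⟨G, hGfin, hGcov⟩ := totallyBounded_iff.1 hC'c.totallyBounded r hr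
  set F : Finset X := hGfin.toFinset with hF
  set A : Set X := finBall F r with hA
  have hC'A : C' ⊆ A := by
    refine hGcov.trans ?_
    apply Set.iUnion₂_mono'
    intro z hz
    exact ⟨z, hGfin.mem_toFinset.2 hz, Metric.ball_subset_closedBall⟩
  have hAne : A.Nonempty := ⟨x, hC'A (Set.mem_union_right _ rfl)⟩
  have hFne : F.Nonempty := finBall_nonempty_finset hAne
  have hAm : (π t₁ x) Aᶜ ≤ ENNReal.ofReal (η/2) :=
    le_trans (measure_mono (Set.compl_subset_compl.2 hC'A)) hC'm
  set φ := bumpBCF A hr with hφ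
  have hnφ : ‖φ‖ ≤ 1 := norm_bumpBCF_le A hr
  have hib : 1 - η/2 ≤ ∫ y, bump A r y ∂(π t₁ x) :=
    integral_bump_ge (finBall_meas F r) hr (π t₁ x) (by linarith) hAm
  have hβ : (0:ℝ) < η/8 := by linarith
  obtain ⟨w, hw, hwprop⟩ := MFS.time_cont h he φ ⟨Real.toNNReal r⁻¹, bump_lipschitz A hr⟩
    x ht₁0 hβ
  refine ⟨w, hw, F, fun t ht htw => ?_⟩
  haveI := h.prob t ht x
  have htw1 : |t - t₁| < w := by
    rcases le_or_gt 0 t₀ with h0 | h0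
    · rwa [ht₁, max_eq_left h0]
    · rw [ht₁, max_eq_right h0.le, sub_zero]
      rw [abs_lt] at htw ⊢
      constructor <;> [linarith [htw.1]; linarith [htw.2]]
  have hest := hwprop t ht htw1
  have hdrop : (1 + 2*‖φ‖) * (η/8) ≤ η/2 := by nlinarith [norm_nonneg φ]
  have hφt : 1 - η ≤ ∫ y, bump A r y ∂(π t x) := by
    have h1 : (∫ v, φ v ∂(π t₁ x)) = ∫ y, bump A r y ∂(π t₁ x) := rfl
    have h2 : (∫ v, φ v ∂(π t x)) = ∫ y, bump A r y ∂(π t x) := rfl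
    have := abs_le.1 hest
    linarith [this.1, h1 ▸ h2 ▸ this.1]
  have h5 := measure_compl_le_of_integral_bump hr (π t x) hφt
  refine le_trans (measure_mono ?_) h5
  apply Set.compl_subset_compl.2
  have := thickening_subset_finBall hFne (le_of_lt hr) hr (F := F)
  rw [show r + r = 2*r by ring] at this
  exact this

/-- tightness of `π t x` for `t ∈ [0,T]`, fixed `x`. -/
lemma MFS.window (h : MarkovFellerSemigroup π) (he : HasEProperty π) (x : X)
    (htx : ∀ t : ℝ, 0 ≤ t → ∀ ε : ℝ, 0 < ε →
      ∃ C : Set X, IsCompact C ∧ (π t x) Cᶜ < ENNReal.ofReal ε)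
    {r η : ℝ} (hr : 0 < r) (hη : 0 < η) (T : ℝ) :
    ∃ F : Finset X, F.Nonempty ∧ ∀ t, 0 ≤ t → t ≤ T →
      (π t x) (finBall F (2*r))ᶜ ≤ ENNReal.ofReal η := by
  classical
  have key := fun t₀ : ℝ => MFS.near_time h he x htx hr hη t₀
  choose w hw F hF using key
  have hcov : Set.Icc (0:ℝ) T ⊆ ⋃ t₀ : ℝ, Metric.ball t₀ (w t₀) := fun t _ =>
    Set.mem_iUnion.2 ⟨t, Metric.mem_ball_self (hw t)⟩
  obtain ⟨G, hG⟩ := isCompact_Icc.elim_finite_subcover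
    (fun t₀ => Metric.ball t₀ (w t₀)) (fun _ => Metric.isOpen_ball) hcov
  refine ⟨insert x (G.biUnion F), ⟨x, Finset.mem_insert_self x _⟩, fun t ht hT => ?_⟩
  obtain ⟨t₀, ht₀G, ht₀⟩ := Set.mem_iUnion₂.1 (hG ⟨ht, hT⟩)
  have hb := hF t₀ t ht (by simpa [Real.dist_eq] using ht₀)
  refine le_trans (measure_mono (Set.compl_subset_compl.2
    (finBall_subset ?_ _))) hb
  intro z hz
  exact Finset.mem_insert_of_mem (Finset.mem_biUnion.2 ⟨t₀, ht₀G, hz⟩)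

/-- tightness of `π t x` for `t ∈ [0,T]`, uniformly over `x ∈ K`. -/
lemma MFS.spread (h : MarkovFellerSemigroup π) (he : HasEProperty π)
    {K : Set X} (hK : IsCompact K)
    (htight : ∀ t, 0 ≤ t → ∀ x ∈ K, ∀ ε : ℝ, 0 < ε →
      ∃ C : Set X, IsCompact C ∧ (π t x) Cᶜ < ENNReal.ofReal ε)
    {r η : ℝ} (hr : 0 < r) (hη : 0 < η) (T : ℝ) :
    ∃ F : Finset X, ∀ t, 0 ≤ t → t ≤ T → ∀ x ∈ K,
      (π t x) (finBall F (3*r))ᶜ ≤ ENNReal.ofReal η := by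
  classical
  have key : ∀ x : X, ∃ δ, 0 < δ ∧ ∃ Fx : Finset X, x ∈ K →
      ∀ t, 0 ≤ t → t ≤ T → ∀ y, dist y x < δ →
      (π t y) (finBall Fx (3*r))ᶜ ≤ ENNReal.ofReal η := by
    intro x
    by_cases hx : x ∈ K
    · obtain ⟨Fx, hFxne, hFx⟩ := MFS.window h he x (fun t ht ε hε => htight t ht x hx ε hε)
        hr (show (0:ℝ) < η/4 by linarith) T
      set A : Set X := finBall Fx (2*r) with hA
      have hAne : A.Nonempty := finBall_nonempty hFxne (by linarith)
      have hbd : ∀ y, |bump A r y| ≤ 1 := fun y => by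
        rw [abs_of_nonneg (bump_nonneg A r y)]; exact bump_le_one A hr y
      obtain ⟨δ, hδ, hδp⟩ := he (bump A r) ⟨Real.toNNReal r⁻¹, bump_lipschitz A hr⟩
        ⟨1, hbd⟩ x (η/4) (by linarith)
      refine ⟨δ, hδ, Fx, fun _ t ht hT y hyx => ?_⟩
      haveI := h.prob t ht x
      haveI := h.prob t ht y
      have h1 : 1 - η/4 ≤ ∫ v, bump A r v ∂(π t x) :=
        integral_bump_ge (finBall_meas Fx (2*r)) hr (π t x) (by linarith) (hFx t ht hT)
      have h2 := hδp y hyx t ht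
      have h3 : 1 - η/2 ≤ ∫ v, bump A r v ∂(π t y) := by
        have := (abs_le.1 h2.le).1
        linarith
      have h4 := measure_compl_le_of_integral_bump hr (π t y) h3
      have h5 : {v | Metric.infDist v A ≤ r} ⊆ finBall Fx (3*r) := by
        have := thickening_subset_finBall hFxne (by linarith : (0:ℝ) ≤ 2*r) hr (F := Fx)
        rwa [show 2*r + r = 3*r by ring] at this
      refine le_trans (measure_mono (Set.compl_subset_compl.2 h5)) ?_
      exact le_trans h4 (ENNReal.ofReal_le_ofReal (by linarith))
    · exact ⟨1, one_pos, ∅, fun hxK => absurd hxK hx⟩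
  choose δ hδ F hF using key
  have hcov : K ⊆ ⋃ i : K, Metric.ball i.val (δ i.val) := fun x hx =>
    Set.mem_iUnion.2 ⟨⟨x, hx⟩, Metric.mem_ball_self (hδ x)⟩
  obtain ⟨G, hG⟩ := hK.elim_finite_subcover
    (fun i : K => Metric.ball i.val (δ i.val)) (fun _ => Metric.isOpen_ball) hcov
  refine ⟨G.biUnion (fun i => F i.val), fun t ht hT x hx => ?_⟩
  obtain ⟨i, hiG, hix⟩ := Set.mem_iUnion₂.1 (hG hx)
  have hb := hF i.val i.property t ht hT x hix
  refine le_trans (measure_mono (Set.compl_subset_compl.2 (finBall_subset ?_ _))) hb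
  intro z hz
  exact Finset.mem_biUnion.2 ⟨i, hiG, hz⟩

/-- the invariant measure gives large mass to finitely many balls -/
lemma MFS.mus_finTight (h : MarkovFellerSemigroup π) (x₀ : X)
    (htx : ∀ t : ℝ, 0 ≤ t → ∀ ε : ℝ, 0 < ε →
      ∃ C : Set X, IsCompact C ∧ (π t x₀) Cᶜ < ENNReal.ofReal ε)
    (μs : Measure X) (hμsP : IsProbabilityMeasure μs)
    (hconv : ∀ φ : BoundedContinuousFunction X ℝ,
      Tendsto (fun t : ℝ => ∫ v, φ v ∂(π t x₀)) atTop (nhds (∫ v, φ v ∂μs)))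
    {r η : ℝ} (hr : 0 < r) (hη : 0 < η) :
    ∃ F : Finset X, F.Nonempty ∧ μs (finBall F r)ᶜ ≤ ENNReal.ofReal η := by
  classical
  -- a.s. separable support
  have hCnk : ∀ n k : ℕ, ∃ C : Set X, IsCompact C ∧
      (π (n:ℝ) x₀) Cᶜ < ENNReal.ofReal (1/(k+1)) := fun n k =>
    htx n (Nat.cast_nonneg n) _ (by positivity)
  choose Cc hCc hCm using hCnk
  set S : Set X := closure (⋃ n : ℕ, ⋃ k : ℕ, (Cc n k ∪ {x₀})) with hS
  have hSclosed : IsClosed S := isClosed_closure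
  have hSsep : TopologicalSpace.IsSeparable S := by
    apply TopologicalSpace.IsSeparable.closure
    refine TopologicalSpace.isSeparable_iUnion.2 (fun n => ?_)
    refine TopologicalSpace.isSeparable_iUnion.2 (fun k => ?_)
    exact ((hCc n k).isSeparable).union (Set.finite_singleton x₀).isSeparable
  have hx₀S : x₀ ∈ S := subset_closure (Set.mem_iUnion.2 ⟨0, Set.mem_iUnion.2
    ⟨0, Set.mem_union_right _ rfl⟩⟩)
  have hSne : S.Nonempty := ⟨x₀, hx₀S⟩
  have hπS : ∀ n : ℕ, (π (n:ℝ) x₀) Sᶜ = 0 := by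
    intro n
    have hbd : ∀ k : ℕ, (π (n:ℝ) x₀) Sᶜ ≤ ENNReal.ofReal (1/(k+1)) := by
      intro k
      refine le_trans (measure_mono (Set.compl_subset_compl.2 ?_)) (hCm n k).le
      have h9 : Cc n k ∪ {x₀} ⊆ S :=
        (Set.subset_iUnion₂ (s := fun n k => Cc n k ∪ {x₀}) n k).trans subset_closure
      exact (Set.subset_union_left).trans h9
    have htend : Tendsto (fun k : ℕ => ENNReal.ofReal (1/(k+1:ℝ))) atTop (nhds 0) := by
      rw [show (0:ℝ≥0∞) = ENNReal.ofReal 0 by simp]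
      apply ENNReal.tendsto_ofReal
      exact tendsto_one_div_add_atTop_nhds_zero_nat
    simpa using ge_of_tendsto' htend hbd
  have hμsS : μs Sᶜ = 0 := by
    -- test functions vanishing on S
    have hEk : ∀ k : ℕ, μs {y | 1/(k+1:ℝ) ≤ Metric.infDist y S} = 0 := by
      intro k
      set g : X → ℝ := fun y => min 1 ((k+1) * Metric.infDist y S) with hg
      have hgcont : Continuous g := continuous_const.min
        (continuous_const.mul (Metric.continuous_infDist_pt S))
      have hgnn : ∀ y, 0 ≤ g y := fun y => le_min zero_le_one
        (mul_nonneg (by positivity) Metric.infDist_nonneg)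
      have hgle : ∀ y, g y ≤ 1 := fun y => min_le_left _ _
      set gB : BoundedContinuousFunction X ℝ :=
        BoundedContinuousFunction.ofNormedAddCommGroup g hgcont 1
          (fun y => by rw [Real.norm_eq_abs, abs_of_nonneg (hgnn y)]; exact hgle y) with hgB
      have hzero : ∀ n : ℕ, ∫ v, gB v ∂(π (n:ℝ) x₀) = 0 := by
        intro n
        have hae : gB =ᵐ[π (n:ℝ) x₀] 0 := by
          refine measure_mono_null ?_ (hπS n)
          intro y hy
          simp only [Function.support, Set.mem_setOf_eq, ne_eq] at hy
          simp only [Set.mem_compl_iff]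
          intro hyS
          apply hy.out
          show g y = 0
          rw [hg]
          simp [Metric.infDist_zero_of_mem hyS]
        calc ∫ v, gB v ∂(π (n:ℝ) x₀) = ∫ v, (0:ℝ) ∂(π (n:ℝ) x₀) := integral_congr_ae hae
          _ = 0 := integral_zero _ _
      have hlim : Tendsto (fun n : ℕ => ∫ v, gB v ∂(π (n:ℝ) x₀)) atTop
          (nhds (∫ v, gB v ∂μs)) := (hconv gB).comp tendsto_natCast_atTop_atTop
      have hμs0 : ∫ v, gB v ∂μs = 0 := by
        have h2 : Tendsto (fun _ : ℕ => (0:ℝ)) atTop (nhds (∫ v, gB v ∂μs)) := by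
          apply hlim.congr
          intro n
          rw [hzero n]
        exact tendsto_nhds_unique h2 tendsto_const_nhds
      -- indicator bound
      set E : Set X := {y | 1/(k+1:ℝ) ≤ Metric.infDist y S} with hE
      have hEmeas : MeasurableSet E :=
        (isClosed_le continuous_const (Metric.continuous_infDist_pt S)).measurableSet
      have hind : ∀ y, E.indicator (fun _ => (1:ℝ)) y ≤ g y := by
        intro y
        by_cases hy : y ∈ E
        · rw [Set.indicator_of_mem hy]
          apply le_min le_rfl
          have : 1/(k+1:ℝ) ≤ Metric.infDist y S := hy
          rw [div_le_iff₀ (by positivity)] at this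
          nlinarith
        · rw [Set.indicator_of_notMem hy]; exact hgnn y
      have h3 : (μs E).toReal ≤ 0 := by
        have h4 : ∫ y, E.indicator (fun _ => (1:ℝ)) y ∂μs ≤ ∫ y, g y ∂μs :=
          integral_mono ((integrable_const (1:ℝ)).indicator hEmeas) (gB.integrable μs) hind
        rw [integral_indicator_const _ hEmeas] at h4
        have : (∫ y, g y ∂μs) = 0 := hμs0
        simp only [smul_eq_mul, mul_one] at h4
        linarith [h4, this ▸ h4, measureReal_def μs E]
      have h5 : μs E ≠ ⊤ := measure_ne_top μs E
      rcases (ENNReal.toReal_eq_zero_iff _).1 (le_antisymm h3 ENNReal.toReal_nonneg) with h6 | h6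
      · exact h6
      · exact absurd h6 h5
    have hcup : Sᶜ ⊆ ⋃ k : ℕ, {y | 1/(k+1:ℝ) ≤ Metric.infDist y S} := by
      intro y hy
      have hpos : 0 < Metric.infDist y S := by
        rcases lt_or_eq_of_le (Metric.infDist_nonneg (x := y) (s := S)) with h' | h'
        · exact h'
        · exfalso
          apply hy
          rw [← hSclosed.closure_eq]
          exact (Metric.mem_closure_iff_infDist_zero hSne).2 h'.symm
      obtain ⟨k, hk⟩ := exists_nat_one_div_lt hpos
      exact Set.mem_iUnion.2 ⟨k, le_of_lt hk⟩
    exact measure_mono_null hcup (measure_iUnion_null hEk)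
  -- countable dense family of balls
  obtain ⟨c, hccount, hcsub⟩ := hSsep
  have hcne : c.Nonempty := by
    rcases c.eq_empty_or_nonempty with rfl | hne
    · simp only [closure_empty] at hcsub
      exact absurd (hcsub hx₀S) (Set.notMem_empty x₀)
    · exact hne
  obtain ⟨f, hf⟩ := Set.Countable.exists_eq_range hccount hcne
  set B : ℕ → Set X := fun m => finBall (Finset.image f (Finset.range (m+1))) r with hB
  have hBmono : Monotone B := by
    intro a b hab
    apply finBall_subset
    apply Finset.image_subset_image
    exact Finset.range_subset_range.2 (by omega)
  have hScov : S ⊆ ⋃ m : ℕ, B m := by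
    intro y hy
    obtain ⟨b, hbc, hbd⟩ := Metric.mem_closure_iff.1 (hcsub hy) r hr
    obtain ⟨i, rfl⟩ := by rw [hf] at hbc; exact hbc
    refine Set.mem_iUnion.2 ⟨i, ?_⟩
    apply Set.mem_biUnion (Finset.mem_image_of_mem f (Finset.self_mem_range_succ i))
    exact Metric.mem_closedBall.2 (le_of_lt hbd)
  have hμsU : μs (⋃ m : ℕ, B m) = 1 := by
    apply le_antisymm prob_le_one
    calc (1:ℝ≥0∞) = μs Set.univ := (measure_univ).symm
      _ = μs S + μs Sᶜ := by
          rw [← measure_add_measure_compl hSclosed.measurableSet]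
      _ = μs S := by rw [hμsS, add_zero]
      _ ≤ μs (⋃ m : ℕ, B m) := measure_mono hScov
  have htendB : Tendsto (fun m => μs (B m)) atTop (nhds 1) := by
    rw [← hμsU]
    exact tendsto_measure_iUnion_atTop hBmono
  rcases le_or_gt 1 (ENNReal.ofReal η) with hcase | hcase
  · exact ⟨Finset.image f (Finset.range 1), ⟨f 0, Finset.mem_image_of_mem f
      (Finset.mem_range.2 one_pos)⟩, le_trans prob_le_one hcase⟩
  · have hηpos : (0:ℝ≥0∞) < ENNReal.ofReal η := ENNReal.ofReal_pos.2 hη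
    have hlt : 1 - ENNReal.ofReal η < 1 :=
      ENNReal.sub_lt_self ENNReal.one_ne_top one_ne_zero (by positivity)
    obtain ⟨m, hm⟩ := (htendB.eventually (eventually_gt_nhds hlt)).exists
    refine ⟨Finset.image f (Finset.range (m+1)), ⟨f 0, Finset.mem_image_of_mem f
      (Finset.mem_range.2 (by omega))⟩, ?_⟩
    rw [prob_compl_eq_one_sub (finBall_meas _ r)]
    rw [tsub_le_iff_right]
    calc (1:ℝ≥0∞) = (1 - ENNReal.ofReal η) + ENNReal.ofReal η :=
          (tsub_add_cancel_of_le hcase.le).symm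
      _ ≤ ENNReal.ofReal η + μs (B m) := by
          rw [add_comm]
          exact add_le_add le_rfl hm.le

/-- large-time uniform tightness over all of `X` (hence over `K`) -/
lemma MFS.largeTime (h : MarkovFellerSemigroup π) (he : HasEProperty π)
    {K : Set X} (hK : IsCompact K) (μs : Measure X) (hμsP : IsProbabilityMeasure μs)
    (hconvx : ∀ x : X, ∀ φ : BoundedContinuousFunction X ℝ,
      Tendsto (fun t : ℝ => ∫ v, φ v ∂(π t x)) atTop (nhds (∫ v, φ v ∂μs)))
    {r η : ℝ} (hr : 0 < r) (hη : 0 < η) {Fμ : Finset X} (hFμne : Fμ.Nonempty)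
    (hμF : μs (finBall Fμ r)ᶜ ≤ ENNReal.ofReal (η/4)) :
    ∃ T : ℝ, 0 ≤ T ∧ ∀ t, T ≤ t → ∀ x ∈ K,
      (π t x) (finBall Fμ (2*r))ᶜ ≤ ENNReal.ofReal η := by
  classical
  set A : Set X := finBall Fμ r with hA
  have hAne : A.Nonempty := finBall_nonempty hFμne hr.le
  have hbd : ∀ y, |bump A r y| ≤ 1 := fun y => by
    rw [abs_of_nonneg (bump_nonneg A r y)]; exact bump_le_one A hr y
  set φB := bumpBCF A hr with hφB
  have hμint : 1 - η/4 ≤ ∫ v, bump A r v ∂μs :=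
    integral_bump_ge (finBall_meas Fμ r) hr μs (by linarith) hμF
  have key : ∀ x : X, ∃ δ, 0 < δ ∧ ∃ Tx : ℝ, ∀ t, Tx ≤ t → 0 ≤ t → ∀ y, dist y x < δ →
      1 - 3*η/4 ≤ ∫ v, bump A r v ∂(π t y) := by
    intro x
    obtain ⟨δ, hδ, hδp⟩ := he (bump A r) ⟨Real.toNNReal r⁻¹, bump_lipschitz A hr⟩
      ⟨1, hbd⟩ x (η/4) (by linarith)
    have hconv := hconvx x φB
    have hev : ∀ᶠ t : ℝ in atTop, 1 - η/2 < ∫ v, φB v ∂(π t x) := by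
      apply hconv.eventually
      apply eventually_gt_nhds
      have : (∫ v, φB v ∂μs) = ∫ v, bump A r v ∂μs := rfl
      rw [this]
      linarith
    obtain ⟨Tx, hTx⟩ := eventually_atTop.1 hev
    refine ⟨δ, hδ, Tx, fun t ht ht0 y hyx => ?_⟩
    have h1 := hTx t ht
    have h2 := hδp y hyx t ht0
    have h3 : (∫ v, φB v ∂(π t x)) = ∫ v, bump A r v ∂(π t x) := rfl
    have h4 : (∫ v, φB v ∂(π t y)) = ∫ v, bump A r v ∂(π t y) := rfl
    rw [h3] at h1
    have := (abs_le.1 h2.le).1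
    linarith
  choose δ hδ Tx hTx using key
  have hcov : K ⊆ ⋃ i : K, Metric.ball i.val (δ i.val) := fun x hx =>
    Set.mem_iUnion.2 ⟨⟨x, hx⟩, Metric.mem_ball_self (hδ x)⟩
  obtain ⟨G, hG⟩ := hK.elim_finite_subcover
    (fun i : K => Metric.ball i.val (δ i.val)) (fun _ => Metric.isOpen_ball) hcov
  set T : ℝ := (insert (0:ℝ) (G.image (fun i => Tx i.val))).max'
    (Finset.insert_nonempty _ _) with hT
  have hT0 : 0 ≤ T := Finset.le_max' _ _ (Finset.mem_insert_self _ _)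
  refine ⟨T, hT0, fun t htT x hx => ?_⟩
  have ht0 : 0 ≤ t := le_trans hT0 htT
  haveI := h.prob t ht0 x
  obtain ⟨i, hiG, hix⟩ := Set.mem_iUnion₂.1 (hG hx)
  have hTxi : Tx i.val ≤ T := by
    refine Finset.le_max' _ (Tx i.val) (Finset.mem_insert_of_mem ?_)
    exact Finset.mem_image.2 ⟨i, hiG, rfl⟩
  have h5 := hTx i.val t (le_trans hTxi htT) ht0 x hix
  have h6 := measure_compl_le_of_integral_bump hr (π t x) h5
  have h7 : {v | Metric.infDist v A ≤ r} ⊆ finBall Fμ (2*r) := by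
    have := thickening_subset_finBall hFμne hr.le hr (F := Fμ)
    rwa [show r + r = 2*r by ring] at this
  refine le_trans (measure_mono (Set.compl_subset_compl.2 h7)) ?_
  exact le_trans h6 (ENNReal.ofReal_le_ofReal (by linarith))

/-- uniform fin-ball tightness at all scales -/
lemma MFS.claim (h : MarkovFellerSemigroup π) (he : HasEProperty π)
    {K : Set X} (hK : IsCompact K) (hKne : K.Nonempty)
    (hstab : AsymptoticallyStable π)
    (htight : ∀ t, 0 ≤ t → ∀ x ∈ K, ∀ ε : ℝ, 0 < ε →
      ∃ C : Set X, IsCompact C ∧ (π t x) Cᶜ < ENNReal.ofReal ε)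
    {r η : ℝ} (hr : 0 < r) (hη : 0 < η) :
    ∃ F : Finset X, ∀ t, 0 ≤ t → ∀ x ∈ K,
      (π t x) (finBall F (3*r))ᶜ ≤ ENNReal.ofReal η := by
  classical
  obtain ⟨x₀, hx₀⟩ := hKne
  obtain ⟨μs, hμsP, -, -, hconv⟩ := hstab
  haveI := hμsP
  have hconvx : ∀ x : X, ∀ φ : BoundedContinuousFunction X ℝ,
      Tendsto (fun t : ℝ => ∫ v, φ v ∂(π t x)) atTop (nhds (∫ v, φ v ∂μs)) := by
    intro x φ
    have h0 := hconv (Measure.dirac x) (by infer_instance) φ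
    apply h0.congr'
    filter_upwards [eventually_ge_atTop (0:ℝ)] with t ht
    rw [MFS.dirac_bind h ht x]
  obtain ⟨Fμ, hFμne, hμF⟩ := MFS.mus_finTight h x₀
    (fun t ht ε hε => htight t ht x₀ hx₀ ε hε) μs hμsP (hconvx x₀) hr
    (show (0:ℝ) < η/4 by linarith)
  obtain ⟨T, hT0, hlarge⟩ := MFS.largeTime h he hK μs hμsP hconvx hr hη hFμne hμF
  obtain ⟨F₁, hsmall⟩ := MFS.spread h he hK htight hr hη T
  refine ⟨F₁ ∪ Fμ, fun t ht x hx => ?_⟩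
  rcases le_total t T with hc | hc
  · refine le_trans (measure_mono (Set.compl_subset_compl.2 ?_)) (hsmall t ht hc x hx)
    rw [finBall_union]
    exact Set.subset_union_left
  · refine le_trans (measure_mono (Set.compl_subset_compl.2 ?_)) (hlarge t hc x hx)
    rw [finBall_union]
    exact (finBall_mono (by linarith)).trans Set.subset_union_right

end SG

end UT

/-- **Uniform tightness on compacts.** Let `X` be a complete metric space, `K ⊆ X`
compact, and `(π_t)` an asymptotically stable Markov–Feller stochastically continuous
semigroup with the e-property such that `P_t^* δ_x = π_t(x,·)` is tight for every `t ≥ 0`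
and `x ∈ K`.  Then the family `{π_t(x,·) : t ≥ 0, x ∈ K}` is uniformly tight. -/
theorem uniform_tightness_on_compacts
    {X : Type*} [MetricSpace X] [CompleteSpace X] [MeasurableSpace X] [BorelSpace X]
    (π : ℝ → X → Measure X) (hMFS : MarkovFellerSemigroup π)
    (K : Set X) (hK : IsCompact K)
    (he : HasEProperty π)
    (hstab : AsymptoticallyStable π)
    (htight : ∀ t, 0 ≤ t → ∀ x ∈ K, ∀ ε : ℝ, 0 < ε →
      ∃ C : Set X, IsCompact C ∧ (π t x) Cᶜ < ENNReal.ofReal ε) :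
    ∀ ε : ℝ, 0 < ε → ∃ Kε : Set X, IsCompact Kε ∧
      ∀ t, 0 ≤ t → ∀ x ∈ K, (π t x) Kεᶜ < ENNReal.ofReal ε := by
  intro ε hε
  rcases K.eq_empty_or_nonempty with rfl | hKne
  · exact ⟨∅, isCompact_empty, fun t ht x hx => absurd hx (Set.notMem_empty x)⟩
  classical
  have claim : ∀ n : ℕ, ∃ F : Finset X, ∀ t, 0 ≤ t → ∀ x ∈ K,
      (π t x) (finBall F ((1/2)^n))ᶜ ≤ ENNReal.ofReal (ε/4 * (1/2)^n) := by
    intro n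
    have hr : (0:ℝ) < (1/2)^n / 3 := by positivity
    have hη : (0:ℝ) < ε/4 * (1/2)^n := by positivity
    obtain ⟨F, hFp⟩ := MFS.claim hMFS he hK hKne hstab htight hr hη
    refine ⟨F, fun t ht x hx => ?_⟩
    have := hFp t ht x hx
    rwa [show 3 * ((1/2)^n / 3) = ((1:ℝ)/2)^n by ring] at this
  choose F hF using claim
  set A : ℕ → Set X := fun n => finBall (F n) ((1/2)^n) with hA
  set Kε : Set X := ⋂ n : ℕ, A n with hKε
  have hclosed : IsClosed Kε := isClosed_iInter (fun n => finBall_closed _ _)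
  have htb : TotallyBounded Kε := by
    rw [Metric.totallyBounded_iff]
    intro δ hδ
    obtain ⟨n, hn⟩ := exists_pow_lt_of_lt_one hδ (by norm_num : (1:ℝ)/2 < 1)
    refine ⟨(F n : Set X), (F n).finite_toSet, ?_⟩
    refine (Set.iInter_subset A n).trans ?_
    refine Set.iUnion₂_mono (fun z _ => ?_)
    intro y hy
    exact Metric.mem_ball.2 (lt_of_le_of_lt (Metric.mem_closedBall.1 hy) hn)
  refine ⟨Kε, TotallyBounded.isCompact_of_isClosed htb hclosed, fun t ht x hx => ?_⟩
  haveI := hMFS.prob t ht x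
  have hsub : Kεᶜ = ⋃ n : ℕ, (A n)ᶜ := by rw [hKε, Set.compl_iInter]
  have hofr : ENNReal.ofReal ((1:ℝ)/2) = (2:ℝ≥0∞)⁻¹ := by
    rw [show (1:ℝ)/2 = (2:ℝ)⁻¹ by norm_num, ENNReal.ofReal_inv_of_pos (by norm_num),
      ENNReal.ofReal_ofNat]
  have hb1 : (π t x) Kεᶜ ≤ ∑' n : ℕ, (π t x) (A n)ᶜ := by
    rw [hsub]; exact measure_iUnion_le _
  have hb2 : ∑' n : ℕ, (π t x) (A n)ᶜ
      ≤ ∑' n : ℕ, ENNReal.ofReal (ε/4) * (2:ℝ≥0∞)⁻¹^n := by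
    refine ENNReal.tsum_le_tsum (fun n => le_trans (hF n t ht x hx) ?_)
    rw [ENNReal.ofReal_mul (by positivity), ENNReal.ofReal_pow (by norm_num), hofr]
  have hgeo : ∑' n : ℕ, ENNReal.ofReal (ε/4) * (2:ℝ≥0∞)⁻¹^n
      = ENNReal.ofReal (ε/4) * 2 := by
    rw [ENNReal.tsum_mul_left, ENNReal.tsum_geometric, ENNReal.one_sub_inv_two]
    congr 1
    simp
  have hhalf : ENNReal.ofReal (ε/4) * 2 = ENNReal.ofReal (ε/2) := by
    rw [show (2:ℝ≥0∞) = ENNReal.ofReal 2 by simp, ← ENNReal.ofReal_mul (by positivity)]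
    congr 1
    ring
  calc (π t x) Kεᶜ ≤ ∑' n : ℕ, (π t x) (A n)ᶜ := hb1
    _ ≤ ∑' n : ℕ, ENNReal.ofReal (ε/4) * (2:ℝ≥0∞)⁻¹^n := hb2
    _ = ENNReal.ofReal (ε/2) := by rw [hgeo, hhalf]
    _ < ENNReal.ofReal ε := (ENNReal.ofReal_lt_ofReal_iff hε).2 (by linarith)
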